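/- Let G be a digraph, s, t vertices with d := dist_G(s,t) < ∞, and let P be a simple s-to-t path with length(P) > d. Let p be the smallest natural number such that at least two distinct vertices of P lie in the layer L_p = {v : dist_G(s,v) = p}, let x and y be the first and second vertices of P in L_p, and let Q be any shortest s-to-y path in G. Then the concatenation Q ∘ P[y→t] is a simple s-to-t path in G of length exactly length(P) − length(P[x→y]). -/

import Mathlib

variable {V : Type*}

/-- `w` is a directed walk from `u` to `v` in the digraph with arc relation `A`:
a nonempty list of vertices whose consecutive members are joined by arcs,
starting at `u` and ending at `v`. -/
def IsDiWalk (A : V → V → Prop) (u v : V) (w : List V) : Prop :=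
  w.Chain' A ∧ w.head? = some u ∧ w.getLast? = some v

/-- The length (number of arcs) of a walk represented as its list of vertices. -/
def walkLength (w : List V) : ℕ :=
  w.length - 1

/-- `w` is a simple directed path from `u` to `v`. -/
def IsDiPath (A : V → V → Prop) (u v : V) (w : List V) : Prop :=
  IsDiWalk A u v w ∧ w.Nodup

/-- Directed distance from `u` to `v`: the minimum length of a directed
`u`-to-`v` walk, or `⊤` if `v` is unreachable from `u`. -/
noncomputable def ddist (A : V → V → Prop) (u v : V) : ℕ∞ :=
  ⨅ (w : List V) (_ : IsDiWalk A u v w), (walkLength w : ℕ∞)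

/-- The internal (non-endpoint) vertices of a path represented as a list. -/
def internalVerts (w : List V) : List V :=
  w.tail.dropLast

/-- Two paths are internally vertex-disjoint if no internal vertex of either
lies on the other. -/
def InternallyDisjoint (w₁ w₂ : List V) : Prop :=
  (∀ a ∈ internalVerts w₁, a ∉ w₂) ∧ (∀ a ∈ internalVerts w₂, a ∉ w₁)

/-- All vertices of `w` lie in the induced subgraph `G_{≥p}` (with respect to
source `s`), i.e. have distance at least `p` from `s`. A path satisfying
`IsDiPath A x y w` together with `InGeq A s p w` is exactly a path of the
induced subgraph of `G` on `{v : dist_G(s,v) ≥ p}`. -/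
def InGeq (A : V → V → Prop) (s : V) (p : ℕ) (w : List V) : Prop :=
  ∀ a ∈ w, (p : ℕ∞) ≤ ddist A s a

section helpers
variable {A : V → V → Prop} {s u v z : V} {w w₁ w₂ : List V}

lemma IsDiWalk.ne_nil (h : IsDiWalk A u v w) : w ≠ [] := by
  rintro rfl; simp [IsDiWalk] at h

lemma ddist_le (h : IsDiWalk A u v w) : ddist A u v ≤ (walkLength w : ℕ∞) :=
  iInf₂_le w h

lemma walk_append (h₁ : IsDiWalk A u v w₁) (h₂ : IsDiWalk A v z w₂) :
    IsDiWalk A u z (w₁ ++ w₂.tail) ∧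
      walkLength (w₁ ++ w₂.tail) = walkLength w₁ + walkLength w₂ := by
  obtain ⟨c₂, hh₂, hl₂⟩ := h₂
  match w₂, hh₂ with
  | v' :: t, hh₂ =>
  have hv : v' = v := by simpa using hh₂
  subst hv
  have hw1 : w₁ ≠ [] := h₁.ne_nil
  constructor
  · refine ⟨List.isChain_append.mpr ⟨h₁.1, c₂.tail, ?_⟩, ?_, ?_⟩
    · intro a ha b hb
      rw [h₁.2.2] at ha
      simp at ha
      subst ha
      exact (List.isChain_cons.mp c₂).1 b hb
    · rw [List.head?_append, h₁.2.1]; rfl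
    · rw [List.getLast?_append]
      match t, hl₂ with
      | [], hl₂ => simp at hl₂ ⊢; subst hl₂; exact h₁.2.2
      | b :: t', hl₂ =>
        rw [List.getLast?_cons_cons] at hl₂
        simp [hl₂]
  · have : 1 ≤ w₁.length := List.length_pos_iff.mpr hw1
    simp only [walkLength, List.length_append, List.length_cons, List.length_tail]
    omega

lemma ddist_self (A : V → V → Prop) (u : V) : ddist A u u = 0 := by
  have h : IsDiWalk A u u [u] := ⟨by exact List.isChain_singleton _, by simp, by simp⟩
  have := ddist_le h
  simpa [walkLength] using this

lemma exists_walk (h : ddist A u v ≠ ⊤) :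
    ∃ w, IsDiWalk A u v w ∧ (walkLength w : ℕ∞) = ddist A u v := by
  have hne : ∃ w, IsDiWalk A u v w := by
    by_contra hc
    push_neg at hc
    apply h
    simp only [ddist, iInf_eq_top]
    intro w hw
    exact absurd hw (hc w)
  set S : Set ℕ := {n | ∃ w, IsDiWalk A u v w ∧ walkLength w = n} with hS
  have hSne : S.Nonempty := ⟨walkLength hne.choose, hne.choose, hne.choose_spec, rfl⟩
  obtain ⟨w₀, hw₀, hl₀⟩ := Nat.sInf_mem hSne
  refine ⟨w₀, hw₀, le_antisymm ?_ ?_⟩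
  · refine le_iInf₂ fun w hw => ?_
    rw [hl₀]
    exact_mod_cast Nat.sInf_le (show walkLength w ∈ S from ⟨w, hw, rfl⟩)
  · exact ddist_le hw₀

lemma ddist_triangle_walk (h : IsDiWalk A u v w) :
    ddist A s v ≤ ddist A s u + (walkLength w : ℕ∞) := by
  by_cases hsu : ddist A s u = ⊤
  · simp [hsu]
  · obtain ⟨w₀, hw₀, hl₀⟩ := exists_walk hsu
    obtain ⟨hw, hl⟩ := walk_append hw₀ h
    calc ddist A s v ≤ (walkLength (w₀ ++ w.tail) : ℕ∞) := ddist_le hw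
      _ = (walkLength w₀ : ℕ∞) + (walkLength w : ℕ∞) := by rw [hl]; push_cast; rfl
      _ = ddist A s u + (walkLength w : ℕ∞) := by rw [hl₀]

lemma walk_take (h : IsDiWalk A u v w) {i : ℕ} (hi : i < w.length) :
    IsDiWalk A u (w[i]) (w.take (i + 1)) := by
  refine ⟨h.1.prefix (List.take_prefix _ _), ?_, ?_⟩
  · rw [List.head?_take]; simp [h.2.1]
  · have hlen : (w.take (i + 1)).length = i + 1 := by
      rw [List.length_take]; omega
    rw [List.getLast?_eq_getElem?, hlen]
    simp only [Nat.add_sub_cancel]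
    rw [List.getElem?_eq_getElem (by omega)]
    congr 1
    exact List.getElem_take

lemma walk_drop (h : IsDiWalk A u v w) {i : ℕ} (hi : i < w.length) :
    IsDiWalk A (w[i]) v (w.drop i) := by
  have hlen : (w.drop i).length = w.length - i := List.length_drop
  refine ⟨h.1.suffix (List.drop_suffix _ _), ?_, ?_⟩
  · rw [List.head?_eq_getElem?]
    rw [List.getElem?_eq_getElem (by omega)]
    congr 1
    rw [List.getElem_drop]
    simp
  · rw [List.getLast?_eq_getElem?, hlen]
    rw [List.getElem?_eq_getElem (by omega)]
    have h2 := h.2.2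
    rw [List.getLast?_eq_getElem?, List.getElem?_eq_getElem (by omega : w.length - 1 < w.length)] at h2
    rw [← h2]
    congr 1
    · rw [List.getElem_drop]
      congr 1
      omega

end helpers

/-- with `p`, `x`, `y` as in the layer analysis of a non-shortest
simple `s`-to-`t` path `P`, and `Q` any shortest `s`-to-`y` path, the
concatenation `Q ∘ P[y→t]` is a simple `s`-to-`t` path of length exactly
`length(P) − length(P[x→y])`. -/
theorem stmt10 [DecidableEq V] (A : V → V → Prop) (s t : V)
    (d : ℕ) (hd : ddist A s t = (d : ℕ∞))
    (P : List V) (hP : IsDiPath A s t P)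
    (hlong : (d : ℕ∞) < (walkLength P : ℕ∞))
    (p : ℕ)
    (hp : ∃ u ∈ P, ∃ v ∈ P, u ≠ v ∧ ddist A s u = (p : ℕ∞) ∧ ddist A s v = (p : ℕ∞))
    (hpmin : ∀ q : ℕ, q < p →
      ¬ ∃ u ∈ P, ∃ v ∈ P, u ≠ v ∧ ddist A s u = (q : ℕ∞) ∧ ddist A s v = (q : ℕ∞))
    (x : V) (hxP : x ∈ P) (hxp : ddist A s x = (p : ℕ∞))
    (hxfirst : ∀ z ∈ P.take (P.idxOf x), ddist A s z ≠ (p : ℕ∞))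
    (y : V) (hyP : y ∈ P) (hyp : ddist A s y = (p : ℕ∞))
    (hxy : P.idxOf x < P.idxOf y)
    (hysecond : ∀ z ∈ P.take (P.idxOf y), z ≠ x → ddist A s z ≠ (p : ℕ∞))
    (Q : List V) (hQ : IsDiPath A s y Q)
    (hQshort : (walkLength Q : ℕ∞) = ddist A s y) :
    IsDiPath A s t (Q ++ (P.drop (P.idxOf y)).tail) ∧
      walkLength (Q ++ (P.drop (P.idxOf y)).tail) =
        walkLength P -
          walkLength ((P.drop (P.idxOf x)).take (P.idxOf y - P.idxOf x + 1)) := by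
  classical
  obtain ⟨hPwalk, hPnd⟩ := hP
  obtain ⟨hQwalk, hQnd⟩ := hQ
  have hixlt : P.idxOf x < P.length := List.idxOf_lt_length_iff.mpr hxP
  have hiylt : P.idxOf y < P.length := List.idxOf_lt_length_iff.mpr hyP
  set n := P.length with hn
  set ix := P.idxOf x with hix
  set iy := P.idxOf y with hiy
  -- upper bound on distance along a walk
  have hub : ∀ (w : List V) (a : V), IsDiWalk A s a w → ∀ i (hi : i < w.length),
      ddist A s w[i] ≤ (i : ℕ∞) := by
    intro w a hw i hi
    have h1 := ddist_le (walk_take hw hi)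
    have h2 : walkLength (w.take (i + 1)) = i := by
      simp only [walkLength, List.length_take]; omega
    rw [h2] at h1
    exact h1
  -- the key induction: ddist A s P[i] = i for i ≤ ix
  have hkey : ∀ i, ∀ (hi : i < n), i ≤ ix → ddist A s P[i] = (i : ℕ∞) := by
    intro i
    induction i using Nat.strong_induction_on with
    | _ i IH =>
      intro hi hile
      match i with
      | 0 =>
        have h0 : P[0] = s := by
          have := hPwalk.2.1
          rw [List.head?_eq_getElem?, List.getElem?_eq_getElem hi] at this
          simpa using this
        rw [h0, ddist_self]
        rfl
      | (j + 1) =>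
        have hle := hub P t hPwalk (j + 1) hi
        have hfin : ddist A s P[j + 1] ≠ ⊤ := by
          intro h; rw [h] at hle
          exact absurd (top_le_iff.mp hle).symm (WithTop.natCast_ne_top _).symm
        obtain ⟨q', hq'⟩ := WithTop.ne_top_iff_exists.mp hfin
        have hq : ddist A s P[j + 1] = (q' : ℕ∞) := by exact_mod_cast hq'.symm
        clear hq'
        rename' q' => q
        rw [hq] at hle ⊢
        have hqle : q ≤ j + 1 := by exact_mod_cast hle
        by_cases hqi : q = j + 1
        · rw [hqi]
        have hq' : q < j + 1 := lt_of_le_of_ne hqle hqi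
        have hqn : q < n := by omega
        have hPq : ddist A s P[q] = (q : ℕ∞) := IH q hq' hqn (by omega)
        have hne : P[q] ≠ P[j + 1] := by
          intro h
          exact hqi (hPnd.getElem_inj_iff.mp h)
        by_cases hqp : q < p
        · exact absurd ⟨P[q], List.getElem_mem _, P[j + 1], List.getElem_mem _, hne,
            hPq, hq⟩ (hpmin q hqp)
        · have hpq : p ≤ q := not_lt.mp hqp
          have hpj : p < j + 1 := by omega
          have hpn : p < n := by omega
          have hPp : ddist A s P[p] = (p : ℕ∞) := IH p hpj hpn (by omega)
          have hmem : P[p] ∈ P.take ix := by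
            rw [List.mem_iff_getElem]
            refine ⟨p, by rw [List.length_take]; omega, ?_⟩
            exact List.getElem_take
          exact absurd hPp (hxfirst _ hmem)
  have hx_ix : P[ix]'hixlt = x := List.getElem_idxOf hixlt
  have hy_iy : P[iy]'hiylt = y := List.getElem_idxOf hiylt
  have hix_p : ix = p := by
    have h1 := hkey ix hixlt le_rfl
    rw [hx_ix, hxp] at h1
    exact_mod_cast h1.symm
  -- vertices strictly after y on P are at distance ≥ p
  have hafter : ∀ j (hj : j < n), iy < j → (p : ℕ∞) ≤ ddist A s P[j] := by
    intro j hj hij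
    by_contra hc
    push_neg at hc
    have hfin : ddist A s P[j] ≠ ⊤ := ne_top_of_lt hc
    obtain ⟨q', hq'⟩ := WithTop.ne_top_iff_exists.mp hfin
    have hq : ddist A s P[j] = (q' : ℕ∞) := by exact_mod_cast hq'.symm
    clear hq'
    rename' q' => q
    rw [hq] at hc
    have hqp : q < p := by exact_mod_cast hc
    have hqix : q ≤ ix := by omega
    have hqn : q < n := by omega
    have hPq := hkey q hqn hqix
    have hne : P[q] ≠ P[j] := by
      intro h
      have := hPnd.getElem_inj_iff.mp h
      omega
    exact hpmin q hqp ⟨P[q], List.getElem_mem _, P[j], List.getElem_mem _, hne, hPq, hq⟩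
  -- length of Q
  have hQne : Q ≠ [] := hQwalk.ne_nil
  have hQlen : walkLength Q = p := by
    have h1 : (walkLength Q : ℕ∞) = (p : ℕ∞) := by rw [hQshort, hyp]
    exact_mod_cast h1
  have hQlen' : Q.length = p + 1 := by
    have : 1 ≤ Q.length := List.length_pos_iff.mpr hQne
    unfold walkLength at hQlen
    omega
  -- distances along Q
  have hQd : ∀ i (hi : i < Q.length), ddist A s Q[i] = (i : ℕ∞) := by
    intro i hi
    have h1 := hub Q y hQwalk i hi
    have h2 := ddist_triangle_walk (s := s) (walk_drop hQwalk hi)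
    have h3 : walkLength (Q.drop i) = p - i := by
      simp only [walkLength, List.length_drop]; omega
    rw [hyp, h3] at h2
    have hfin : ddist A s Q[i] ≠ ⊤ := by
      intro h; rw [h] at h1
      exact absurd (top_le_iff.mp h1).symm (WithTop.natCast_ne_top _).symm
    obtain ⟨q', hq'⟩ := WithTop.ne_top_iff_exists.mp hfin
    have hq : ddist A s Q[i] = (q' : ℕ∞) := by exact_mod_cast hq'.symm
    clear hq'
    rename' q' => q
    rw [hq] at h1 h2 ⊢
    have e1 : q ≤ i := by exact_mod_cast h1
    have e2 : p ≤ q + (p - i) := by exact_mod_cast h2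
    have : q = i := by omega
    rw [this]
  -- y is the last vertex of Q
  have hQlast : Q[Q.length - 1]'(by omega) = y := by
    have h2 := hQwalk.2.2
    rw [List.getLast?_eq_getElem?, List.getElem?_eq_getElem (by omega : Q.length - 1 < Q.length)] at h2
    simpa using h2
  -- disjointness
  have hdisj : ∀ a ∈ Q, a ∉ P.drop (iy + 1) := by
    intro a ha hmem
    obtain ⟨i, hi, rfl⟩ := List.mem_iff_getElem.mp ha
    obtain ⟨k, hk, hak⟩ := List.mem_iff_getElem.mp hmem
    have hkn : iy + 1 + k < n := by
      rw [List.length_drop] at hk; omega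
    have hj : Q[i] = P[iy + 1 + k]'hkn := by
      rw [← hak, List.getElem_drop]
    have h1 : ddist A s Q[i] = (i : ℕ∞) := hQd i hi
    have h2 : (p : ℕ∞) ≤ ddist A s Q[i] := by
      rw [hj]; exact hafter (iy + 1 + k) hkn (by omega)
    rw [h1] at h2
    have hip : p ≤ i := by exact_mod_cast h2
    have hie : i = Q.length - 1 := by omega
    have hyj : Q[i] = y := by rw [← hQlast]; congr 1
    have : P[iy]'hiylt = P[iy + 1 + k]'hkn := by rw [hy_iy, ← hyj, hj]
    have := hPnd.getElem_inj_iff.mp this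
    omega
  -- assemble
  have hwalk_dropy : IsDiWalk A y t (P.drop iy) := by
    have h := walk_drop hPwalk hiylt
    rwa [hy_iy] at h
  obtain ⟨hw, hlen⟩ := walk_append hQwalk hwalk_dropy
  refine ⟨⟨hw, ?_⟩, ?_⟩
  · refine List.Nodup.append hQnd ?_ ?_
    · rw [List.tail_drop]
      exact (List.drop_sublist _ _).nodup hPnd
    · rw [List.tail_drop]
      exact hdisj
  · rw [hlen, hQlen]
    have h1 : walkLength (P.drop iy) = n - iy - 1 := by
      simp only [walkLength, List.length_drop]; rfl
    have h2 : walkLength ((P.drop ix).take (iy - ix + 1)) = iy - ix := by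
      simp only [walkLength, List.length_take, List.length_drop]
      omega
    rw [h1, h2]
    show p + (n - iy - 1) = n - 1 - (iy - ix)
    omega
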